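/- arXiv:0902.4064 — 4 statements merged into one kernel-verified Lean document; each statement's English description precedes it below -/
import Mathlib

section
/- For complex numbers z_0, ..., z_{n-1} with all arguments z_k + j (0 ≤ j, k ≤ n-1) avoiding the nonpositive integers, the determinant det(Γ(z_k + j))_{j,k=0,...,n-1} equals ∏_{k=0}^{n-1} Γ(z_k) · ∏_{0 ≤ j < k < n} (z_k - z_j). -/
open Finset

lemma gamma_add_asc (w : ℂ) (j : ℕ) (hw : ∀ i : ℕ, i < j → w + (i : ℂ) ≠ 0) :
    Complex.Gamma (w + (j : ℕ)) = Complex.Gamma w * (ascPochhammer ℂ j).eval w := by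
  induction j with
  | zero => simp [ascPochhammer_zero]
  | succ j ih =>
    have h1 : w + ((j + 1 : ℕ) : ℂ) = (w + j) + 1 := by push_cast; ring
    rw [h1, Complex.Gamma_add_one _ (hw j (Nat.lt_succ_self j)),
      ih (fun i hi => hw i (hi.trans (Nat.lt_succ_self j))), ascPochhammer_succ_eval]
    ring

lemma prod_lt_pairs {n : ℕ} (f : Fin n × Fin n → ℂ) :
    ∏ q ∈ Finset.univ.filter (fun q : Fin n × Fin n => q.1 < q.2), f q =
      ∏ i, ∏ j ∈ Finset.Ioi i, f (i, j) := by
  rw [Finset.prod_sigma' Finset.univ (fun i => Finset.Ioi i) (fun i j => f (i, j))]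
  refine Finset.prod_bij (fun q _ => (⟨q.1, q.2⟩ : Σ _ : Fin n, Fin n)) ?_ ?_ ?_ ?_
  · intro q hq; simp only [Finset.mem_filter] at hq; simp [Finset.mem_sigma, hq.2]
  · intro a _ b _ h
    simp only [Sigma.mk.inj_iff, heq_eq_eq] at h
    exact Prod.ext h.1 h.2
  · intro x hx
    simp only [Finset.mem_sigma, Finset.mem_Ioi] at hx
    exact ⟨(x.1, x.2), by simp [hx.2], rfl⟩
  · intro q _; rfl

/-- The Gamma-function determinant evaluation
`det(Γ(z_k + j)) = ∏_k Γ(z_k) · ∏_{j<k} (z_k - z_j)`. -/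
theorem stmt1 (n : ℕ) (z : Fin n → ℂ)
    (hz : ∀ (k : Fin n) (j : Fin n) (m : ℕ), z k + (j : ℕ) ≠ -(m : ℂ)) :
    Matrix.det (Matrix.of fun j k : Fin n => Complex.Gamma (z k + (j : ℕ))) =
      (∏ k, Complex.Gamma (z k)) *
        ∏ q ∈ Finset.univ.filter (fun q : Fin n × Fin n => q.1 < q.2), (z q.2 - z q.1) := by
  have key : ∀ (j k : Fin n),
      Complex.Gamma (z k + (j : ℕ)) = Complex.Gamma (z k) * (ascPochhammer ℂ (j : ℕ)).eval (z k) := by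
    intro j k
    refine gamma_add_asc (z k) j (fun i hi => ?_)
    have := hz k ⟨i, hi.trans j.2⟩ 0
    simpa using this
  have hM : (Matrix.of fun j k : Fin n => Complex.Gamma (z k + (j : ℕ)))
      = (Matrix.of fun j k : Fin n =>
          (ascPochhammer ℂ (j : ℕ)).eval (z k)) * Matrix.diagonal (fun k => Complex.Gamma (z k)) := by
    ext j k
    simp [Matrix.mul_apply, Matrix.diagonal, key, mul_comm]
  rw [hM, Matrix.det_mul, Matrix.det_diagonal, mul_comm]
  congr 1
  rw [prod_lt_pairs]
  have := (Matrix.det_eval_matrixOfPolynomials_eq_det_vandermonde z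
      (fun i : Fin n => ascPochhammer ℂ (i : ℕ))
      (fun i => ascPochhammer_natDegree ℂ (i : ℕ)) (fun i => monic_ascPochhammer _ _)).symm
  calc (Matrix.of fun j k : Fin n => (ascPochhammer ℂ (j : ℕ)).eval (z k)).det
      = (Matrix.of fun k j : Fin n => (ascPochhammer ℂ (j : ℕ)).eval (z k)).det := by
        rw [← Matrix.det_transpose]; rfl
    _ = (Matrix.vandermonde z).det := this
    _ = ∏ i, ∏ j ∈ Finset.Ioi i, (z j - z i) := Matrix.det_vandermonde z
end

section
/- Suppose for each n the polynomials Θ_n, Ω_n (arising from the Laguerre–Magnus differential system W p_n' = (Ω_n - V) p_n - a_n Θ_n p_{n-1}) satisfy the two recurrences W + a_{n+1}² Θ_{n+1} - a_n² Θ_{n-1} = (x - b_n)(Ω_{n+1} - Ω_n) and (x - b_n) Θ_n = Ω_{n+1} + Ω_n, and Ω_0 = V. Then for every n, Ω_n² - a_n² Θ_n Θ_{n-1} = V² + W ∑_{i=0}^{n-1} Θ_i (as an identity of polynomials). -/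
open Polynomial Finset

/-- Telescoping identity `Ω_n² - a_n² Θ_n Θ_{n-1} = V² + W ∑_{i=0}^{n-1} Θ_i`
following from the Laguerre–Magnus recurrences for `Θ_n`, `Ω_n`. -/
theorem stmt6 (W V : Polynomial ℝ) (Θ Ω : ℤ → Polynomial ℝ) (a b : ℤ → ℝ)
    (ha0 : a 0 = 0) (hΩ0 : Ω 0 = V)
    (hrec1 : ∀ n : ℤ, 0 ≤ n →
      W + C ((a (n + 1)) ^ 2) * Θ (n + 1) - C ((a n) ^ 2) * Θ (n - 1) =
        (X - C (b n)) * (Ω (n + 1) - Ω n))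
    (hrec2 : ∀ n : ℤ, 0 ≤ n →
      (X - C (b n)) * Θ n = Ω (n + 1) + Ω n)
    (n : ℕ) :
    (Ω n) ^ 2 - C ((a n) ^ 2) * Θ n * Θ ((n : ℤ) - 1) =
      V ^ 2 + W * ∑ i ∈ Finset.range n, Θ (i : ℤ) := by
  induction n with
  | zero => simp [hΩ0, ha0]
  | succ n ih =>
      have h1 := hrec1 n (Int.ofNat_nonneg n)
      have h2 := hrec2 n (Int.ofNat_nonneg n)
      rw [Finset.sum_range_succ]
      push_cast
      have hidx : ((n : ℤ) + 1 - 1) = (n : ℤ) := by ring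
      rw [hidx]
      linear_combination ih - Θ (n : ℤ) * h1 - (Ω ((n : ℤ) + 1) - Ω (n : ℤ)) * h2
end

section
/- Let θ_n(s), κ_n(s) be differentiable functions satisfying the coupled system t θ_n' = 2κ_n + (2n + α + 1 + μ + t + θ_n)θ_n and t κ_n' = (1/(θ_n + t) + 1/θ_n)κ_n² + (2n + α + μ + 1 - (2n + α + μ)t/(θ_n + t))κ_n - (n² + (n + μ/2)(α + μ))t - μ²t²/(4θ_n) + (n + μ/2)(n + α + μ/2)t²/(θ_n + t), on an interval where θ_n and θ_n + t are nonzero. Then q := (θ_n + t)/θ_n satisfies the fifth Painlevé equation q'' = (1/(2q) + 1/(q-1))(q')² - q'/t + ((q-1)²/t²)(α₁ q + α₂/q) + α₃ q/t + α₄ q(q+1)/(q-1) with α₁ = μ²/2, α₂ = -α²/2, α₃ = -(2n + α + 1 + μ), α₄ = -1/2. -/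
set_option maxHeartbeats 4000000


/-- If `θ_n, κ_n` satisfy the coupled system of Corollary `cor2:tderivatives`, then
`q = (θ_n + t)/θ_n` satisfies the fifth Painlevé equation with parameters
`α₁ = μ²/2, α₂ = -α²/2, α₃ = -(2n+α+1+μ), α₄ = -1/2`. -/
theorem stmt10 (n : ℕ) (α μ : ℝ) (S : Set ℝ) (hS : IsOpen S)
    (hSpos : ∀ t ∈ S, 0 < t)
    (θ κ : ℝ → ℝ)
    (hθd : ∀ t ∈ S, DifferentiableAt ℝ θ t)
    (hκd : ∀ t ∈ S, DifferentiableAt ℝ κ t)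
    (hθ0 : ∀ t ∈ S, θ t ≠ 0) (hθt : ∀ t ∈ S, θ t + t ≠ 0)
    (q : ℝ → ℝ) (hq : q = fun t => (θ t + t) / θ t)
    (hq0 : ∀ t ∈ S, q t ≠ 0) (hq1 : ∀ t ∈ S, q t ≠ 1)
    (heq1 : ∀ t ∈ S, t * deriv θ t =
      2 * κ t + (2 * (n : ℝ) + α + 1 + μ + t + θ t) * θ t)
    (heq2 : ∀ t ∈ S, t * deriv κ t =
      (1 / (θ t + t) + 1 / θ t) * κ t ^ 2
        + (2 * (n : ℝ) + α + μ + 1 - (2 * (n : ℝ) + α + μ) * t / (θ t + t)) * κ t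
        - ((n : ℝ) ^ 2 + ((n : ℝ) + μ / 2) * (α + μ)) * t
        - μ ^ 2 * t ^ 2 / (4 * θ t)
        + ((n : ℝ) + μ / 2) * ((n : ℝ) + α + μ / 2) * t ^ 2 / (θ t + t)) :
    ∀ t ∈ S,
      deriv (deriv q) t =
        (1 / (2 * q t) + 1 / (q t - 1)) * (deriv q t) ^ 2 - deriv q t / t
          + ((q t - 1) ^ 2 / t ^ 2) * ((μ ^ 2 / 2) * q t + (-(α ^ 2) / 2) / q t)
          + (-(2 * (n : ℝ) + α + 1 + μ)) * q t / t
          + (-(1 / 2 : ℝ)) * q t * (q t + 1) / (q t - 1) := by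
  intro t ht
  set g : ℝ → ℝ := fun s =>
    (θ s - (2 * κ s + (2 * (n : ℝ) + α + 1 + μ + s + θ s) * θ s)) / (θ s) ^ 2 with hgdef
  have key : ∀ s ∈ S, deriv q s = g s := by
    intro s hs
    have hθs := hθ0 s hs
    have hds : HasDerivAt θ (deriv θ s) s := (hθd s hs).hasDerivAt
    have h1 : HasDerivAt q
        (((deriv θ s + 1) * θ s - (θ s + s) * deriv θ s) / (θ s) ^ 2) s := by
      rw [hq]
      exact (hds.add (hasDerivAt_id s)).div hds hθs
    rw [h1.deriv, hgdef]
    have e1 := heq1 s hs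
    have hnum : (deriv θ s + 1) * θ s - (θ s + s) * deriv θ s
        = θ s - s * deriv θ s := by ring
    rw [hnum, e1]
  -- second derivative
  have hEq : deriv q =ᶠ[nhds t] g := Filter.eventuallyEq_of_mem (hS.mem_nhds ht) key
  have hθt0 : θ t ≠ 0 := hθ0 t ht
  have hθtt0 : θ t + t ≠ 0 := hθt t ht
  have ht0 : t ≠ 0 := (hSpos t ht).ne'
  have hdsθ : HasDerivAt θ (deriv θ t) t := (hθd t ht).hasDerivAt
  have hdsκ : HasDerivAt κ (deriv κ t) t := (hκd t ht).hasDerivAt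
  set a := deriv θ t with ha
  set b := deriv κ t with hb
  have hnum : HasDerivAt
      (fun s => θ s - (2 * κ s + (2 * (n : ℝ) + α + 1 + μ + s + θ s) * θ s))
      (a - (2 * b + (1 + a) * θ t + (2 * (n : ℝ) + α + 1 + μ + t + θ t) * a)) t := by
    have h2 : HasDerivAt (fun s => (2 * (n : ℝ) + α + 1 + μ + s + θ s) * θ s)
        ((1 + a) * θ t + (2 * (n : ℝ) + α + 1 + μ + t + θ t) * a) t := by
      have := (((hasDerivAt_const t (2 * (n : ℝ) + α + 1 + μ)).add
        (hasDerivAt_id t)).add hdsθ).mul hdsθ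
      convert this using 1 <;> try rfl
      simp only [Pi.add_apply, id_eq]
      ring
    have := hdsθ.sub ((hdsκ.const_mul 2).add h2)
    convert this using 1 <;> try rfl
    ring
  have hden : HasDerivAt (fun s => (θ s) ^ 2) (2 * θ t * a) t := by
    have := hdsθ.pow 2
    convert this using 1 <;> try rfl
    ring
  have hgd : HasDerivAt g
      (((a - (2 * b + (1 + a) * θ t + (2 * (n : ℝ) + α + 1 + μ + t + θ t) * a)) * (θ t) ^ 2
        - (θ t - (2 * κ t + (2 * (n : ℝ) + α + 1 + μ + t + θ t) * θ t)) * (2 * θ t * a))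
        / ((θ t) ^ 2) ^ 2) t :=
    hnum.div hden (pow_ne_zero 2 hθt0)
  have hdd : deriv (deriv q) t =
      ((a - (2 * b + (1 + a) * θ t + (2 * (n : ℝ) + α + 1 + μ + t + θ t) * a)) * (θ t) ^ 2
        - (θ t - (2 * κ t + (2 * (n : ℝ) + α + 1 + μ + t + θ t) * θ t)) * (2 * θ t * a))
        / ((θ t) ^ 2) ^ 2 := by
    rw [hEq.deriv_eq, hgd.deriv]
  have e1 := heq1 t ht
  have e2 := heq2 t ht
  have haa : a = (2 * κ t + (2 * (n : ℝ) + α + 1 + μ + t + θ t) * θ t) / t := by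
    rw [eq_div_iff ht0]
    linear_combination e1
  have hbb : b = ((1 / (θ t + t) + 1 / θ t) * κ t ^ 2
        + (2 * (n : ℝ) + α + μ + 1 - (2 * (n : ℝ) + α + μ) * t / (θ t + t)) * κ t
        - ((n : ℝ) ^ 2 + ((n : ℝ) + μ / 2) * (α + μ)) * t
        - μ ^ 2 * t ^ 2 / (4 * θ t)
        + ((n : ℝ) + μ / 2) * ((n : ℝ) + α + μ / 2) * t ^ 2 / (θ t + t)) / t := by
    rw [eq_div_iff ht0]
    linear_combination e2
  have hq1' : q t - 1 ≠ 0 := sub_ne_zero.mpr (hq1 t ht)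
  have hq0' : q t ≠ 0 := hq0 t ht
  rw [hdd, key t ht]
  simp only [hgdef, hq] at hq1' hq0' ⊢
  rw [haa, hbb]
  field_simp [ht0, hθt0, hθtt0]
  ring
end

section
/- Let H be defined by tH = q(q-1)²p² - ((v₂ - v₁)(q-1)² - 2(v₁ + v₂)q(q-1) + tq)p + (v₃ - v₁)(v₄ - v₁)(q-1) with v₁ + v₂ + v₃ + v₄ = 0. If q(t), p(t) satisfy the Hamilton equations q' = ∂H/∂p, p' = -∂H/∂q, then eliminating p shows q satisfies the fifth Painlevé equation with parameters α₁ = (v₃ - v₄)²/2, α₂ = -(v₂ - v₁)²/2, α₃ = 2v₁ + 2v₂ - 1, α₄ = -1/2. -/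
lemma quad_deriv (a b c T x : ℝ) :
    HasDerivAt (fun y : ℝ => (a * y ^ 2 - b * y + c) / T) ((2 * a * x - b) / T) x := by
  have h : HasDerivAt (fun y : ℝ => a * y ^ 2 - b * y + c) (2 * a * x - b) x := by
    have := (((hasDerivAt_pow 2 x).const_mul a).sub ((hasDerivAt_id' x).const_mul b)).add_const c
    convert this using 1
    all_goals first | rfl | (push_cast; ring)
  exact h.div_const T

lemma cubic_deriv (a b c d T x : ℝ) :
    HasDerivAt (fun y : ℝ => (a * y ^ 3 + b * y ^ 2 + c * y + d) / T)
      ((3 * a * x ^ 2 + 2 * b * x + c) / T) x := by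
  have h : HasDerivAt (fun y : ℝ => a * y ^ 3 + b * y ^ 2 + c * y + d)
      (3 * a * x ^ 2 + 2 * b * x + c) x := by
    have := ((((hasDerivAt_pow 3 x).const_mul a).add ((hasDerivAt_pow 2 x).const_mul b)).add
      ((hasDerivAt_id' x).const_mul c)).add_const d
    convert this using 1
    all_goals first | rfl | (push_cast; ring)
  exact h.div_const T


set_option maxHeartbeats 2000000 in
/-- If `(q, p)` satisfy the Hamilton equations for the Painlevé V Hamiltonian
`tH = q(q-1)²p² - ((v₂-v₁)(q-1)² - 2(v₁+v₂)q(q-1) + tq)p + (v₃-v₁)(v₄-v₁)(q-1)`,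
then `q` satisfies the fifth Painlevé equation with parameters
`α₁ = (v₃-v₄)²/2, α₂ = -(v₂-v₁)²/2, α₃ = 2v₁+2v₂-1, α₄ = -1/2`. -/
theorem stmt11 (v₁ v₂ v₃ v₄ : ℝ) (hv : v₁ + v₂ + v₃ + v₄ = 0)
    (H : ℝ → ℝ → ℝ → ℝ)
    (hH : ∀ t q p, H t q p =
      (q * (q - 1) ^ 2 * p ^ 2
        - ((v₂ - v₁) * (q - 1) ^ 2 - 2 * (v₁ + v₂) * q * (q - 1) + t * q) * p
        + (v₃ - v₁) * (v₄ - v₁) * (q - 1)) / t)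
    (S : Set ℝ) (hS : IsOpen S) (ht0 : ∀ t ∈ S, t ≠ 0)
    (q p : ℝ → ℝ)
    (hqd : ∀ t ∈ S, DifferentiableAt ℝ q t)
    (hpd : ∀ t ∈ S, DifferentiableAt ℝ p t)
    (hq0 : ∀ t ∈ S, q t ≠ 0) (hq1 : ∀ t ∈ S, q t ≠ 1)
    (hham1 : ∀ t ∈ S, deriv q t = deriv (fun p' => H t (q t) p') (p t))
    (hham2 : ∀ t ∈ S, deriv p t = - deriv (fun q' => H t q' (p t)) (q t)) :
    ∀ t ∈ S,
      deriv (deriv q) t =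
        (1 / (2 * q t) + 1 / (q t - 1)) * (deriv q t) ^ 2 - deriv q t / t
          + ((q t - 1) ^ 2 / t ^ 2) *
              (((v₃ - v₄) ^ 2 / 2) * q t + (-((v₂ - v₁) ^ 2) / 2) / q t)
          + (2 * v₁ + 2 * v₂ - 1) * q t / t
          + (-(1 / 2 : ℝ)) * q t * (q t + 1) / (q t - 1) := by
  -- first derivative formula for q
  have hq' : ∀ t ∈ S, deriv q t =
      (2 * q t * (q t - 1) ^ 2 * p t -
        ((v₂ - v₁) * (q t - 1) ^ 2 - 2 * (v₁ + v₂) * q t * (q t - 1) + t * q t)) / t := by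
    intro t ht
    rw [hham1 t ht]
    have hfe : (fun p' => H t (q t) p') = fun y : ℝ =>
        (q t * (q t - 1) ^ 2 * y ^ 2 -
          ((v₂ - v₁) * (q t - 1) ^ 2 - 2 * (v₁ + v₂) * q t * (q t - 1) + t * q t) * y +
          (v₃ - v₁) * (v₄ - v₁) * (q t - 1)) / t :=
      funext fun y => hH t (q t) y
    rw [hfe, (quad_deriv _ _ _ _ (p t)).deriv]
    ring
  intro t ht
  have hQ0 := hq0 t ht
  have hQ1 : q t - 1 ≠ 0 := sub_ne_zero.mpr (hq1 t ht)
  have hT := ht0 t ht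
  -- first derivative formula for p
  have hp' : deriv p t =
      -((3 * (p t) ^ 2 * (q t) ^ 2 +
          2 * (-2 * (p t) ^ 2 - (v₂ - v₁) * p t + 2 * (v₁ + v₂) * p t) * q t +
          ((p t) ^ 2 + 2 * (v₂ - v₁) * p t - 2 * (v₁ + v₂) * p t - t * p t +
            (v₃ - v₁) * (v₄ - v₁))) / t) := by
    rw [hham2 t ht]
    have hfe : (fun q' => H t q' (p t)) = fun y : ℝ =>
        ((p t) ^ 2 * y ^ 3 +
          (-2 * (p t) ^ 2 - (v₂ - v₁) * p t + 2 * (v₁ + v₂) * p t) * y ^ 2 +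
          ((p t) ^ 2 + 2 * (v₂ - v₁) * p t - 2 * (v₁ + v₂) * p t - t * p t +
            (v₃ - v₁) * (v₄ - v₁)) * y +
          (-(v₂ - v₁) * p t - (v₃ - v₁) * (v₄ - v₁))) / t := by
      funext y; rw [hH t y (p t)]; ring
    rw [hfe, (cubic_deriv _ _ _ _ _ (q t)).deriv]
  -- second derivative
  have hq : HasDerivAt q (deriv q t) t := (hqd t ht).hasDerivAt
  have hp : HasDerivAt p (deriv p t) t := (hpd t ht).hasDerivAt
  have hsq : HasDerivAt (fun s => (q s - 1) ^ 2)
      ((2 : ℕ) * (q t - 1) ^ (2 - 1) * deriv q t) t := (hq.sub_const 1).pow 2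
  have hNum : HasDerivAt (fun s => 2 * q s * (q s - 1) ^ 2 * p s -
      ((v₂ - v₁) * (q s - 1) ^ 2 - 2 * (v₁ + v₂) * q s * (q s - 1) + s * q s))
      (((2 * deriv q t * (q t - 1) ^ 2 +
          2 * q t * ((2 : ℕ) * (q t - 1) ^ (2 - 1) * deriv q t)) * p t +
          2 * q t * (q t - 1) ^ 2 * deriv p t) -
        ((v₂ - v₁) * ((2 : ℕ) * (q t - 1) ^ (2 - 1) * deriv q t) -
          (2 * (v₁ + v₂) * deriv q t * (q t - 1) +
            2 * (v₁ + v₂) * q t * deriv q t) +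
          (1 * q t + t * deriv q t))) t := by
    exact (((hq.const_mul 2).mul hsq).mul hp).sub
      (((hsq.const_mul (v₂ - v₁)).sub
        ((hq.const_mul (2 * (v₁ + v₂))).mul (hq.sub_const 1))).add
        ((hasDerivAt_id' t).mul hq))
  have hF := hNum.div (hasDerivAt_id' t) hT
  have heq : deriv q =ᶠ[nhds t] (fun s => (2 * q s * (q s - 1) ^ 2 * p s -
      ((v₂ - v₁) * (q s - 1) ^ 2 - 2 * (v₁ + v₂) * q s * (q s - 1) + s * q s)) / s) :=
    Filter.eventuallyEq_of_mem (hS.mem_nhds ht) (fun s hs => hq' s hs)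
  have e3 := heq.deriv_eq.trans hF.deriv
  rw [e3, hp']
  -- express p in terms of deriv q
  have hP : p t = (t * deriv q t +
      ((v₂ - v₁) * (q t - 1) ^ 2 - 2 * (v₁ + v₂) * q t * (q t - 1) + t * q t)) /
      (2 * q t * (q t - 1) ^ 2) := by
    rw [eq_div_iff (mul_ne_zero (mul_ne_zero two_ne_zero hQ0) (pow_ne_zero 2 hQ1))]
    have := hq' t ht
    field_simp at this
    linarith [this]
  rw [hP]
  have hv4 : v₄ = -v₁ - v₂ - v₃ := by linarith
  subst hv4
  field_simp
  ring
end
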